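/- For every real number t ≥ 1, the sum over n from ⌊t⌋+1 to infinity of 1/n² is strictly less than (π²-6)/(3t). -/

import Mathlib

open Real Filter Topology in
lemma telescope_hasSum (a : ℝ) (ha : 0 < a) :
    HasSum (fun n : ℕ => (1 : ℝ) / (((n : ℝ) + a) * ((n : ℝ) + a + 1))) (1 / a) := by
  have hne : ∀ n : ℕ, (n : ℝ) + a ≠ 0 := fun n => by positivity
  rw [hasSum_iff_tendsto_nat_of_nonneg (fun n => by positivity)]
  have key : ∀ n : ℕ, ∑ i ∈ Finset.range n, (1 : ℝ) / (((i : ℝ) + a) * ((i : ℝ) + a + 1))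
      = 1 / a - 1 / ((n : ℝ) + a) := by
    intro n
    have := Finset.sum_range_sub' (f := fun i : ℕ => (1 : ℝ) / ((i : ℝ) + a)) n
    simp only [Nat.cast_zero, zero_add] at this
    rw [← this]
    apply Finset.sum_congr rfl
    intro i _
    have h1 : ((i : ℝ) + a) ≠ 0 := hne i
    have h2 : (((i : ℕ) + 1 : ℕ) : ℝ) + a ≠ 0 := hne (i + 1)
    push_cast at h2 ⊢
    rw [div_sub_div _ _ h1 h2]
    congr 1 <;> ring
  simp only [key]
  have : Tendsto (fun n : ℕ => 1 / ((n : ℝ) + a)) atTop (𝓝 0) := by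
    simpa [one_div, Pi.inv_def] using
      (tendsto_atTop_add_const_right atTop a tendsto_natCast_atTop_atTop).inv_tendsto_atTop
  simpa using (tendsto_const_nhds (x := 1 / a)).sub this

open Real in
theorem sum_inv_sq_tail_lt (t : ℝ) (ht : 1 ≤ t) :
    (∑' n : ℕ, (1 : ℝ) / ((n : ℝ) + ⌊t⌋₊ + 1) ^ 2) < (π ^ 2 - 6) / (3 * t) := by
  set m : ℕ := ⌊t⌋₊ with hm
  have hm1 : 1 ≤ m := Nat.le_floor (by exact_mod_cast ht)
  have htm : t < (m : ℝ) + 1 := Nat.lt_floor_add_one t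
  have ht0 : 0 < t := lt_of_lt_of_le one_pos ht
  have hpi : 3.141592 < π := pi_gt_d6
  have hpi2 : 9.8 < π ^ 2 := by nlinarith
  rcases eq_or_lt_of_le hm1 with h1 | h2
  · -- m = 1 : exact value π²/6 - 1
    have hsum : HasSum (fun n : ℕ => (1 : ℝ) / ((n : ℝ) + m + 1) ^ 2) (π ^ 2 / 6 - 1) := by
      have h2 := (hasSum_nat_add_iff' (f := fun n : ℕ => (1 : ℝ) / (n : ℝ) ^ 2) 2).mpr
        hasSum_zeta_two
      simp only [Finset.sum_range_succ, Finset.sum_range_zero] at h2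
      norm_num at h2
      convert h2 using 2 with n
      · rfl
      rw [← h1]
      push_cast
      ring_nf
    rw [hsum.tsum_eq]
    have htm' : t < 2 := by rw [← h1] at htm; push_cast at htm; linarith
    rw [lt_div_iff₀ (by positivity)]
    nlinarith
  · -- m ≥ 2 : bound by 1/(m + 1/2)
    have hm2 : (2 : ℝ) ≤ (m : ℝ) := by exact_mod_cast h2
    have htel := telescope_hasSum ((m : ℝ) + 1 / 2) (by linarith)
    have hle : (∑' n : ℕ, (1 : ℝ) / ((n : ℝ) + m + 1) ^ 2) ≤ 1 / ((m : ℝ) + 1 / 2) := by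
      rw [← htel.tsum_eq]
      apply Summable.tsum_le_tsum _ _ htel.summable
      · intro n
        rw [div_le_div_iff₀ (by positivity) (by positivity)]
        nlinarith [sq_nonneg ((n : ℝ) + m + 1)]
      · apply Summable.of_nonneg_of_le (fun n => by positivity) _ htel.summable
        intro n
        rw [div_le_div_iff₀ (by positivity) (by positivity)]
        nlinarith [sq_nonneg ((n : ℝ) + m + 1)]
    apply lt_of_le_of_lt hle
    rw [div_lt_div_iff₀ (by linarith) (by positivity)]
    nlinarith
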